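/- Let x ∈ [l,u] and ε ≥ 0, with T(x,ε) the ε-tangent cone generated by G = {−e_i : i ∉ I_l(x,ε)} ∪ {e_i : i ∉ I_u(x,ε)} ∪ {0}. If g ∈ R^n and the Euclidean projection of g onto T(x,ε) is nonzero, then there exists d ∈ G with ‖proj_{T(x,ε)}(g)‖ / √n ≤ g·d. -/

import Mathlib

open scoped RealInnerProductSpace

/-- The generating set `G` of the ε-tangent cone:
`{-e_i : i ∉ I_l(x,ε)} ∪ {e_i : i ∉ I_u(x,ε)} ∪ {0}`. -/
def GenSet {n : ℕ} (l u x : EuclideanSpace ℝ (Fin n)) (ε : ℝ) :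
    Set (EuclideanSpace ℝ (Fin n)) :=
  {v | (∃ i : Fin n, ¬ (x i ≤ l i + ε) ∧ v = -(EuclideanSpace.single i (1:ℝ))) ∨
       (∃ i : Fin n, ¬ (u i - ε ≤ x i) ∧ v = EuclideanSpace.single i (1:ℝ)) ∨ v = 0}

/-- The ε-tangent cone `T(x, ε)`: nonnegative combinations of the generators. -/
def TCone {n : ℕ} (l u x : EuclideanSpace ℝ (Fin n)) (ε : ℝ) :
    Set (EuclideanSpace ℝ (Fin n)) :=
  {d | ∃ a b : Fin n → ℝ, (∀ j, 0 ≤ a j) ∧ (∀ j, 0 ≤ b j) ∧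
    (∀ j, x j ≤ l j + ε → a j = 0) ∧ (∀ j, u j - ε ≤ x j → b j = 0) ∧
    d = ∑ j, (b j - a j) • EuclideanSpace.single j (1:ℝ)}

theorem stmt4 {n : ℕ} (l u x : EuclideanSpace ℝ (Fin n)) (ε : ℝ) (hε : 0 ≤ ε)
    (hlu : ∀ j, l j < u j) (hx : ∀ j, l j ≤ x j ∧ x j ≤ u j)
    (g p : EuclideanSpace ℝ (Fin n))
    (hpT : p ∈ TCone l u x ε)
    (hproj : ∀ y ∈ TCone l u x ε, ‖g - p‖ ≤ ‖g - y‖)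
    (hp0 : p ≠ 0) :
    ∃ d ∈ GenSet l u x ε, ‖p‖ / Real.sqrt n ≤ ⟪g, d⟫ := by
  obtain ⟨a, b, ha, hb, hal, hbu, hpeq⟩ := hpT
  have hcomp : ∀ (c : Fin n → ℝ) (i : Fin n),
      (∑ j, c j • EuclideanSpace.single j (1:ℝ)) i = c i := by
    intro c i
    have h : (∑ j, c j • EuclideanSpace.single j (1:ℝ)) i
        = ∑ j, (c j • EuclideanSpace.single j (1:ℝ)) i :=
      by rw [WithLp.ofLp_sum, Finset.sum_apply]
    rw [h]
    simp [EuclideanSpace.single_apply]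
  have hpi : ∀ i, p i = b i - a i := fun i => by rw [hpeq]; exact hcomp _ i
  have hinner : ∀ v w : EuclideanSpace ℝ (Fin n), ⟪v, w⟫ = ∑ i, v i * w i := by
    intro v w; simp [PiLp.inner_apply]; exact Finset.sum_congr rfl fun i _ => mul_comm _ _
  have hppos : 0 < ‖p‖ := norm_pos_iff.mpr hp0
  have hnp2 : ‖p‖^2 = ∑ i, (p i)^2 := by
    rw [← real_inner_self_eq_norm_sq, hinner]
    exact Finset.sum_congr rfl fun i _ => (sq (p i)).symm
  -- Step 1 : ‖p‖² ≤ ⟪g, p⟫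
  have key : ‖p‖^2 ≤ ⟪g, p⟫ := by
    refine le_of_forall_pos_le_add fun η hη => ?_
    set δ : ℝ := min 1 (η / ‖p‖^2) with hδdef
    have hδpos : 0 < δ := lt_min one_pos (div_pos hη (by positivity))
    have hδ1 : δ ≤ 1 := min_le_left _ _
    have hδη : δ * ‖p‖^2 ≤ η := by
      calc δ * ‖p‖^2 ≤ (η / ‖p‖^2) * ‖p‖^2 := by
            apply mul_le_mul_of_nonneg_right (min_le_right _ _) (by positivity)
        _ = η := by field_simp
    have hy : (1-δ) • p ∈ TCone l u x ε := by
      refine ⟨fun j => (1-δ) * a j, fun j => (1-δ) * b j,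
        fun j => mul_nonneg (by linarith) (ha j),
        fun j => mul_nonneg (by linarith) (hb j),
        fun j hj => by show (1-δ) * a j = 0; rw [hal j hj]; ring,
        fun j hj => by show (1-δ) * b j = 0; rw [hbu j hj]; ring, ?_⟩
      rw [hpeq, Finset.smul_sum]
      refine Finset.sum_congr rfl fun j _ => ?_
      rw [smul_smul]; congr 1; ring
    have h2 := hproj _ hy
    have h3 : ‖g - p‖^2 ≤ ‖g - (1-δ)•p‖^2 := pow_le_pow_left₀ (norm_nonneg _) h2 2
    rw [norm_sub_sq_real, norm_sub_sq_real, real_inner_smul_right, norm_smul,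
      Real.norm_eq_abs, abs_of_nonneg (by linarith : (0:ℝ) ≤ 1-δ)] at h3
    nlinarith [sq_nonneg ‖p‖, hδpos, hδη]
  -- pick a nonzero coordinate
  have hex : ∃ i, p i ≠ 0 := by
    by_contra h; push_neg at h
    exact hp0 (by ext i; simpa using h i)
  obtain ⟨i0, hi0⟩ := hex
  have hsn : 0 < Real.sqrt n := Real.sqrt_pos.mpr (by exact_mod_cast i0.pos)
  have hsing : ∀ i, ⟪g, (EuclideanSpace.single i (1:ℝ))⟫ = g i := by
    intro i; rw [hinner]; simp [EuclideanSpace.single_apply]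
  by_contra hcon
  push_neg at hcon
  set M : ℝ := ‖p‖ / Real.sqrt n with hMdef
  have hMpos : 0 < M := div_pos hppos hsn
  have hbound : ∀ i, p i ≠ 0 → g i * p i < M * |p i| := by
    intro i hi
    rcases lt_or_gt_of_ne hi with hneg | hpos
    · have hai : 0 < a i := by have h1 := hpi i; have h2 := hb i; linarith
      have hxi : ¬ (x i ≤ l i + ε) := fun h => by have := hal i h; linarith
      have hd := hcon _ (Or.inl ⟨i, hxi, rfl⟩)
      rw [inner_neg_right, hsing i] at hd
      rw [abs_of_neg hneg]
      nlinarith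
    · have hbi : 0 < b i := by have h1 := hpi i; have h2 := ha i; linarith
      have hxi : ¬ (u i - ε ≤ x i) := fun h => by have := hbu i h; linarith
      have hd := hcon _ (Or.inr (Or.inl ⟨i, hxi, rfl⟩))
      rw [hsing i] at hd
      rw [abs_of_pos hpos]
      nlinarith
  have hsum : ⟪g, p⟫ < M * ∑ i, |p i| := by
    rw [hinner, Finset.mul_sum]
    refine Finset.sum_lt_sum (fun i _ => ?_) ⟨i0, Finset.mem_univ _, hbound i0 hi0⟩
    by_cases h : p i = 0
    · simp [h]
    · exact (hbound i h).le
  have hcs : ∑ i, |p i| ≤ Real.sqrt n * ‖p‖ := by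
    have h1 := Finset.sum_mul_sq_le_sq_mul_sq Finset.univ (fun _ : Fin n => (1:ℝ))
      (fun i => |p i|)
    have h2 : (∑ i, |p i|)^2 ≤ (n : ℝ) * ‖p‖^2 := by
      simpa [sq_abs, hnp2] using h1
    have h3 := Real.sqrt_le_sqrt h2
    rwa [Real.sqrt_sq (by positivity), Real.sqrt_mul (by positivity),
      Real.sqrt_sq hppos.le] at h3
    
  have hfin : M * ∑ i, |p i| ≤ M * (Real.sqrt n * ‖p‖) :=
    mul_le_mul_of_nonneg_left hcs hMpos.le
  have heq : M * (Real.sqrt n * ‖p‖) = ‖p‖^2 := by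
    rw [hMdef]; field_simp
  linarith
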